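/- Fix ρ ∈ (0,1). There exists h₀ ∈ (0,1) such that for every h ∈ (0,h₀) the function f_h(v) = v − 1 + (v+1)·exp(−2v·h^{−ρ}) has exactly one zero w_h in (0,∞); this zero satisfies w_h ∈ (1 − h^{ρ/2}, 1), and (1 − w_h)·exp(2h^{−ρ}) → 2 as h → 0⁺ (that is, w_h = 1 − 2(1+o(1))·exp(−2h^{−ρ})). -/

import Mathlib

open Real Set

noncomputable section

lemma deriv_aux (T : ℝ) :
    deriv (fun v : ℝ => v - 1 + (v + 1) * Real.exp (-2 * v * T))
      = fun v => 1 + (1 + (-2*T) * (v + 1)) * Real.exp (-2 * v * T) := by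
  funext v
  have h : HasDerivAt (fun v : ℝ => v - 1 + (v + 1) * Real.exp (-2 * v * T))
      (1 + (1 + (-2*T) * (v + 1)) * Real.exp (-2 * v * T)) v := by
    have he : HasDerivAt (fun v : ℝ => Real.exp (-2 * v * T)) ((-2*T) * Real.exp (-2 * v * T)) v := by
      have : HasDerivAt (fun v : ℝ => -2 * v * T) (-2*T) v := by
        simpa using ((hasDerivAt_id v).const_mul (-2 : ℝ)).mul_const T
      simpa [mul_comm] using this.exp
    have h1 : HasDerivAt (fun v : ℝ => v - 1) 1 v := (hasDerivAt_id v).sub_const 1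
    have h2 : HasDerivAt (fun v : ℝ => (v + 1) * Real.exp (-2 * v * T))
        (1 * Real.exp (-2 * v * T) + (v + 1) * ((-2*T) * Real.exp (-2 * v * T))) v :=
      ((hasDerivAt_id v).add_const 1).mul he
    have := h1.add h2
    exact this.congr_deriv (by ring)
  exact h.deriv

lemma deriv2_aux (T : ℝ) (v : ℝ) :
    (deriv^[2] (fun v : ℝ => v - 1 + (v + 1) * Real.exp (-2 * v * T))) v
      = (4*T*(T*(v+1) - 1)) * Real.exp (-2 * v * T) := by
  have h0 : (deriv^[2] (fun v : ℝ => v - 1 + (v + 1) * Real.exp (-2 * v * T))) v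
      = deriv (deriv (fun v : ℝ => v - 1 + (v + 1) * Real.exp (-2 * v * T))) v := rfl
  rw [h0, deriv_aux T]
  have he : HasDerivAt (fun v : ℝ => Real.exp (-2 * v * T)) ((-2*T) * Real.exp (-2 * v * T)) v := by
    have : HasDerivAt (fun v : ℝ => -2 * v * T) (-2*T) v := by
      simpa using ((hasDerivAt_id v).const_mul (-2 : ℝ)).mul_const T
    simpa [mul_comm] using this.exp
  have h2 : HasDerivAt (fun v : ℝ => 1 + (1 + (-2*T) * (v + 1)) * Real.exp (-2 * v * T))
      (0 + ((-2*T) * Real.exp (-2 * v * T) + (1 + (-2*T) * (v + 1)) * ((-2*T) * Real.exp (-2 * v * T)))) v := by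
    refine (hasDerivAt_const v (1:ℝ)).add ?_
    have h3 : HasDerivAt (fun v : ℝ => 1 + (-2*T) * (v + 1)) (-2*T) v := by
      exact ((hasDerivAt_const v (1:ℝ)).add (((hasDerivAt_id v).add_const 1).const_mul (-2*T))).congr_deriv (by ring)
    exact h3.mul he
  rw [h2.deriv]; ring

lemma strict_convex_aux (T : ℝ) (hT : 1 < T) :
    StrictConvexOn ℝ (Ici (0:ℝ)) (fun v : ℝ => v - 1 + (v + 1) * Real.exp (-2 * v * T)) := by
  apply strictConvexOn_of_deriv2_pos (convex_Ici 0)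
  · fun_prop
  · intro x hx
    rw [interior_Ici] at hx
    rw [deriv2_aux]
    have hx0 : (0:ℝ) < x := hx
    have hTx : (0:ℝ) < T*x := mul_pos (by linarith) hx0
    have h2 : (0:ℝ) < T*(x+1) - 1 := by nlinarith
    have h1 : (0:ℝ) < 4*T*(T*(x+1) - 1) := mul_pos (by linarith) h2
    exact mul_pos h1 (Real.exp_pos _)

lemma per_T (T ε : ℝ) (hε0 : 0 < ε) (hε : ε < 1/2) (hT : ε^2 * T = 1) :
    ∃ w ∈ Ioo (1-ε) 1, (w - 1 + (w + 1) * Real.exp (-2 * w * T) = 0) ∧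
      ∀ v, 0 < v → v - 1 + (v + 1) * Real.exp (-2 * v * T) = 0 → v = w := by
  have hT4 : 4 < T := by nlinarith [sq_nonneg ε, sq_nonneg (ε - 1/2)]
  set f : ℝ → ℝ := fun v => v - 1 + (v + 1) * Real.exp (-2 * v * T) with hf
  -- f(1-ε) < 0
  have hfl : f (1-ε) < 0 := by
    have h1 : Real.exp (-2 * (1-ε) * T) < Real.exp (-T) := by
      apply Real.exp_lt_exp.2; nlinarith
    have h2 : Real.exp (-T) < ε^2 := by
      have hTpos : (0:ℝ) < T := by linarith
      have hxe := Real.add_one_lt_exp (x := T) (by positivity)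
      have hlt : 1 < ε^2 * Real.exp T := by nlinarith
      rw [Real.exp_neg, inv_eq_one_div, div_lt_iff₀ (Real.exp_pos T)]
      nlinarith
    have : (1 - ε + 1) * Real.exp (-2 * (1-ε) * T) < 2 * ε^2 := by nlinarith [Real.exp_pos (-2*(1-ε)*T)]
    have : f (1-ε) < (1 - ε) - 1 + 2*ε^2 := by simp only [hf]; nlinarith
    nlinarith
  have hfr : 0 < f 1 := by
    simp only [hf]
    have := Real.exp_pos (-2 * 1 * T)
    nlinarith
  have hcont : ContinuousOn f (Icc (1-ε) 1) := by fun_prop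
  have hle : (1:ℝ) - ε ≤ 1 := by linarith
  obtain ⟨w, hwmem, hw0⟩ := intermediate_value_Ioo hle hcont (by exact ⟨hfl, hfr⟩ : (0:ℝ) ∈ Ioo (f (1-ε)) (f 1))
  have hconv := strict_convex_aux T (by linarith)
  have hf0 : f 0 = 0 := by simp [hf]
  have hwpos : 0 < w := by
    have := hwmem.1; linarith
  -- key: if f b = 0 with b > 0, then f a < 0 for a in (0,b)
  have key : ∀ b, 0 < b → f b = 0 → ∀ a, 0 < a → a < b → f a < 0 := by
    intro b hb hfb a ha hab
    have hb' : (0:ℝ) < b := lt_trans ha hab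
    have hdiv : a/b < 1 := (div_lt_one hb').2 hab
    have harg : (1 - a/b) • (0:ℝ) + (a/b) • b = a := by
      simp only [smul_eq_mul]; field_simp; ring
    have hkey := hconv.2 (self_mem_Ici) (le_of_lt hb' : (0:ℝ) ≤ b) (ne_of_lt hb')
      (by linarith : (0:ℝ) < 1 - a/b) (by positivity : (0:ℝ) < a/b) (by ring)
    rw [harg] at hkey
    have hkey' : f a < (1 - a/b) • f 0 + (a/b) • f b := hkey
    rw [hf0, hfb] at hkey'
    simpa using hkey' 
  refine ⟨w, hwmem, hw0, ?_⟩
  intro v hv hfv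
  by_contra hne
  have hfv' : f v = 0 := hfv
  rcases lt_or_gt_of_ne hne with h | h
  · have := key w hwpos hw0 v hv h; rw [hfv'] at this; exact lt_irrefl 0 this
  · have := key v hv hfv' w hwpos h; rw [hw0] at this; exact lt_irrefl 0 this

/-- The secular function whose zeros `w > 0` correspond, via `λ = -w²`, to the negative
eigenvalues of the 1D Laplacian on `(0, h^{-ρ})` with Robin condition `u'(0) = -u(0)`
and Dirichlet condition `u(h^{-ρ}) = 0`. -/
def secular (ρ h v : ℝ) : ℝ := v - 1 + (v + 1) * Real.exp (-2 * v * h ^ (-ρ))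

theorem secular_unique_zero (ρ : ℝ) (hρ : ρ ∈ Set.Ioo (0 : ℝ) 1) :
    ∃ h₀ ∈ Set.Ioo (0 : ℝ) 1, ∃ w : ℝ → ℝ,
      (∀ h ∈ Set.Ioo (0 : ℝ) h₀,
        0 < w h ∧ secular ρ h (w h) = 0 ∧
        (∀ v : ℝ, 0 < v → secular ρ h v = 0 → v = w h) ∧
        w h ∈ Set.Ioo (1 - h ^ (ρ / 2)) 1) ∧
      Filter.Tendsto (fun h : ℝ => (1 - w h) * Real.exp (2 * h ^ (-ρ)))
        (nhdsWithin 0 (Set.Ioi 0)) (nhds 2) := by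
  obtain ⟨hρ0, hρ1⟩ := hρ
  set h₀ : ℝ := (1/2 : ℝ) ^ (2/ρ) with hh₀
  have h₀pos : 0 < h₀ := Real.rpow_pos_of_pos (by norm_num) _
  have h₀lt1 : h₀ < 1 := Real.rpow_lt_one (by norm_num) (by norm_num) (by positivity)
  -- basic facts for h in the range
  have hfacts : ∀ h ∈ Set.Ioo (0:ℝ) h₀,
      0 < h ^ (ρ/2) ∧ h ^ (ρ/2) < 1/2 ∧ (h ^ (ρ/2))^2 * h ^ (-ρ) = 1 := by
    intro h hh
    obtain ⟨hh1, hh2⟩ := hh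
    refine ⟨Real.rpow_pos_of_pos hh1 _, ?_, ?_⟩
    · have := Real.rpow_lt_rpow hh1.le hh2 (by positivity : (0:ℝ) < ρ/2)
      calc h ^ (ρ/2) < h₀ ^ (ρ/2) := this
        _ = (1/2 : ℝ) ^ ((2/ρ) * (ρ/2)) := by
            rw [hh₀, ← Real.rpow_mul (by norm_num : (0:ℝ) ≤ 1/2)]
        _ = 1/2 := by
            have hone : (2/ρ) * (ρ/2) = 1 := by field_simp
            rw [hone, Real.rpow_one]
    · rw [← Real.rpow_natCast (h ^ (ρ/2)), ← Real.rpow_mul hh1.le, ← Real.rpow_add hh1]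
      norm_num
  -- existence+uniqueness for each h
  have hP : ∀ h ∈ Set.Ioo (0:ℝ) h₀, ∃ v, v ∈ Ioo (1 - h ^ (ρ/2)) 1 ∧
      secular ρ h v = 0 ∧ ∀ u, 0 < u → secular ρ h u = 0 → u = v := by
    intro h hh
    obtain ⟨hε0, hε, hT⟩ := hfacts h hh
    obtain ⟨v, hv1, hv2, hv3⟩ := per_T (h ^ (-ρ)) (h ^ (ρ/2)) hε0 hε hT
    exact ⟨v, hv1, hv2, hv3⟩
  classical
  set w : ℝ → ℝ := fun h =>
    if H : ∃ v, v ∈ Ioo (1 - h ^ (ρ/2)) 1 ∧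
      secular ρ h v = 0 ∧ ∀ u, 0 < u → secular ρ h u = 0 → u = v then H.choose else 1
      with hwdef
  have hwspec : ∀ h ∈ Set.Ioo (0:ℝ) h₀, w h ∈ Ioo (1 - h ^ (ρ/2)) 1 ∧
      secular ρ h (w h) = 0 ∧ ∀ u, 0 < u → secular ρ h u = 0 → u = w h := by
    intro h hh
    have H := hP h hh
    have : w h = H.choose := by rw [hwdef]; exact dif_pos H
    rw [this]
    exact H.choose_spec
  refine ⟨h₀, ⟨h₀pos, h₀lt1⟩, w, ?_, ?_⟩
  · intro h hh
    obtain ⟨hmem, hzero, huniq⟩ := hwspec h hh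
    obtain ⟨hε0, hε, _⟩ := hfacts h hh
    have : 0 < w h := by
      have := hmem.1
      have : 1 - h ^ (ρ/2) > 1/2 := by linarith
      linarith [hmem.1]
    exact ⟨this, hzero, fun v hv hv0 => huniq v hv hv0, hmem⟩
  · -- the limit
    have hbounds : ∀ h ∈ Set.Ioo (0:ℝ) h₀,
        2 - h ^ (ρ/2) ≤ (1 - w h) * Real.exp (2 * h ^ (-ρ)) ∧
        (1 - w h) * Real.exp (2 * h ^ (-ρ)) ≤
          2 * Real.exp (4 * (h ^ (-ρ) * Real.exp (-(h ^ (-ρ))))) := by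
      intro h hh
      obtain ⟨hmem, hzero, _⟩ := hwspec h hh
      obtain ⟨hε0, hε, hT1⟩ := hfacts h hh
      set T := h ^ (-ρ) with hTdef
      set v := w h with hvdef
      have hTpos : 0 < T := Real.rpow_pos_of_pos hh.1 _
      have hT4 : 4 < T := by nlinarith [sq_nonneg (h ^ (ρ/2)), sq_nonneg (h ^ (ρ/2) - 1/2)]
      have hv1 : v < 1 := hmem.2
      have hvlow : 1 - h ^ (ρ/2) < v := hmem.1
      have hvhalf : 1/2 < v := by linarith
      have heq : 1 - v = (v + 1) * Real.exp (-2 * v * T) := by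
        have : v - 1 + (v + 1) * Real.exp (-2 * v * T) = 0 := hzero
        linarith
      have hmain : (1 - v) * Real.exp (2 * T) = (v + 1) * Real.exp (2 * (1 - v) * T) := by
        have h2 : (2:ℝ) * (1 - v) * T = (-2*v*T) + 2*T := by ring
        rw [h2, Real.exp_add, heq]
        ring
      constructor
      · rw [hmain]
        have h1 : 1 ≤ Real.exp (2 * (1 - v) * T) := by
          apply Real.one_le_exp
          nlinarith
        nlinarith [Real.exp_pos (2 * (1 - v) * T)]
      · rw [hmain]
        have hub : 1 - v ≤ 2 * Real.exp (-T) := by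
          rw [heq]
          have : Real.exp (-2 * v * T) ≤ Real.exp (-T) := by
            apply Real.exp_le_exp.2
            nlinarith
          nlinarith [Real.exp_pos (-2 * v * T), Real.exp_pos (-T)]
        have hexp : Real.exp (2 * (1 - v) * T) ≤ Real.exp (4 * (T * Real.exp (-T))) := by
          apply Real.exp_le_exp.2
          nlinarith [Real.exp_pos (-T)]
        nlinarith [Real.exp_pos (2 * (1 - v) * T), Real.exp_pos (4 * (T * Real.exp (-T)))]
    -- tendsto of bounds
    have hTtends : Filter.Tendsto (fun h : ℝ => h ^ (-ρ)) (nhdsWithin 0 (Set.Ioi 0)) Filter.atTop := by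
      have h1 : Filter.Tendsto (fun h : ℝ => h ^ ρ) (nhdsWithin 0 (Set.Ioi 0)) (nhdsWithin 0 (Set.Ioi 0)) := by
        apply tendsto_nhdsWithin_of_tendsto_nhds_of_eventually_within
        · have := (Real.continuousAt_rpow_const 0 ρ (Or.inr hρ0.le)).tendsto
          rw [Real.zero_rpow (ne_of_gt hρ0)] at this
          exact this.mono_left nhdsWithin_le_nhds
        · filter_upwards [self_mem_nhdsWithin] with x hx
          exact Real.rpow_pos_of_pos hx _
      have h2 : Filter.Tendsto (fun h : ℝ => (h ^ ρ)⁻¹) (nhdsWithin 0 (Set.Ioi 0)) Filter.atTop :=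
        tendsto_inv_nhdsGT_zero.comp h1
      apply h2.congr'
      filter_upwards [self_mem_nhdsWithin] with x hx
      rw [Real.rpow_neg (le_of_lt hx)]
    have hεtends : Filter.Tendsto (fun h : ℝ => h ^ (ρ/2)) (nhdsWithin 0 (Set.Ioi 0)) (nhds 0) := by
      have := (Real.continuousAt_rpow_const 0 (ρ/2) (Or.inr (by positivity : (0:ℝ) ≤ ρ/2))).tendsto
      rw [Real.zero_rpow (by positivity : ρ/2 ≠ 0)] at this
      exact this.mono_left nhdsWithin_le_nhds
    have hlow : Filter.Tendsto (fun h : ℝ => 2 - h ^ (ρ/2)) (nhdsWithin 0 (Set.Ioi 0)) (nhds 2) := by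
      have := (tendsto_const_nhds (x := (2:ℝ)) (f := nhdsWithin (0:ℝ) (Set.Ioi 0))).sub hεtends
      simpa using this
    have hupp : Filter.Tendsto (fun h : ℝ => 2 * Real.exp (4 * (h ^ (-ρ) * Real.exp (-(h ^ (-ρ))))))
        (nhdsWithin 0 (Set.Ioi 0)) (nhds 2) := by
      have hx : Filter.Tendsto (fun x : ℝ => x * Real.exp (-x)) Filter.atTop (nhds 0) := by
        have := Real.tendsto_pow_mul_exp_neg_atTop_nhds_zero 1
        simpa using this
      have h3 : Filter.Tendsto (fun h : ℝ => h ^ (-ρ) * Real.exp (-(h ^ (-ρ))))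
          (nhdsWithin 0 (Set.Ioi 0)) (nhds 0) := hx.comp hTtends
      have h4 : Filter.Tendsto (fun h : ℝ => Real.exp (4 * (h ^ (-ρ) * Real.exp (-(h ^ (-ρ))))))
          (nhdsWithin 0 (Set.Ioi 0)) (nhds 1) := by
        have h5 := h3.const_mul (4:ℝ)
        rw [mul_zero] at h5
        have := (Real.continuous_exp.tendsto 0).comp h5
        simpa [Function.comp_def] using this
      have := h4.const_mul (2:ℝ)
      simpa using this
    apply tendsto_of_tendsto_of_tendsto_of_le_of_le' hlow hupp
    · filter_upwards [Ioo_mem_nhdsGT_of_mem (by exact ⟨le_refl _, h₀pos⟩ : (0:ℝ) ∈ Set.Ico 0 h₀)] with h hh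
      exact (hbounds h hh).1
    · filter_upwards [Ioo_mem_nhdsGT_of_mem (by exact ⟨le_refl _, h₀pos⟩ : (0:ℝ) ∈ Set.Ico 0 h₀)] with h hh
      exact (hbounds h hh).2
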